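/- arXiv:2310.14286 — 3 statements merged into one kernel-verified Lean document; each statement's English description precedes it below -/
import Mathlib

section
/- Let B be a real symmetric positive semidefinite d×d matrix and u ∈ ℝ^d. Then for every s ∈ ℕ and p = 2^s, one has (uᵀ B u)^p ≤ ‖u‖^{2p−2} · (uᵀ B^p u), where ‖·‖ is the Euclidean norm. -/
open MeasureTheory ProbabilityTheory Matrix
noncomputable section

/-- Euclidean norm of a vector in `ℝ^d`. -/
def euclNorm {d : ℕ} (u : Fin d → ℝ) : ℝ := Real.sqrt (∑ i, u i ^ 2)

lemma euclNorm_sq {d : ℕ} (u : Fin d → ℝ) : euclNorm u ^ 2 = ∑ i, u i ^ 2 :=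
  Real.sq_sqrt (Finset.sum_nonneg fun i _ => sq_nonneg _)

lemma euclNorm_nonneg {d : ℕ} (u : Fin d → ℝ) : 0 ≤ euclNorm u := Real.sqrt_nonneg _

lemma key_cs {d : ℕ} (B : Matrix (Fin d) (Fin d) ℝ) (hB : B.PosSemidef)
    (u : Fin d → ℝ) :
    (u ⬝ᵥ B.mulVec u) ^ 2 ≤ euclNorm u ^ 2 * (u ⬝ᵥ (B * B).mulVec u) := by
  rw [euclNorm_sq]
  have hsym : Bᵀ = B := hB.1
  have h1 : u ⬝ᵥ (B * B).mulVec u = ∑ i, (B.mulVec u i) ^ 2 := by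
    rw [← Matrix.mulVec_mulVec, Matrix.dotProduct_mulVec, ← Matrix.mulVec_transpose, hsym]
    simp [dotProduct, sq]
  rw [h1]
  exact Finset.sum_mul_sq_le_sq_mul_sq Finset.univ u (B.mulVec u)

/-- For a real symmetric positive semidefinite `d × d` matrix `B`,
a vector `u ∈ ℝ^d`, and `p = 2^s`, one has
`(uᵀ B u)^p ≤ ‖u‖^(2p-2) * (uᵀ B^p u)`. -/
theorem stmt0 {d : ℕ} (hd : 1 ≤ d) (B : Matrix (Fin d) (Fin d) ℝ)
    (hB : B.PosSemidef) (u : Fin d → ℝ) (s : ℕ) (p : ℕ) (hp : p = 2 ^ s) :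
    (u ⬝ᵥ B.mulVec u) ^ p ≤ euclNorm u ^ (2 * p - 2) * (u ⬝ᵥ (B ^ p).mulVec u) := by
  subst hp
  induction s with
  | zero => simp
  | succ s ih =>
    set q := 2 ^ s with hq
    have hq1 : 1 ≤ q := Nat.one_le_two_pow
    have hBq : (B ^ q).PosSemidef := hB.pow q
    have hBu : 0 ≤ u ⬝ᵥ B.mulVec u := by
      have := hB.dotProduct_mulVec_nonneg u
      simpa using this
    have hBqu : 0 ≤ u ⬝ᵥ (B ^ q).mulVec u := by
      have := hBq.dotProduct_mulVec_nonneg u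
      simpa using this
    have step1 : (u ⬝ᵥ B.mulVec u) ^ (2 ^ (s + 1))
        = ((u ⬝ᵥ B.mulVec u) ^ q) ^ 2 := by
      rw [← pow_mul, pow_succ]
    have step2 : ((u ⬝ᵥ B.mulVec u) ^ q) ^ 2
        ≤ (euclNorm u ^ (2 * q - 2) * (u ⬝ᵥ (B ^ q).mulVec u)) ^ 2 :=
      pow_le_pow_left₀ (pow_nonneg hBu q) ih 2
    have step3 : (u ⬝ᵥ (B ^ q).mulVec u) ^ 2
        ≤ euclNorm u ^ 2 * (u ⬝ᵥ (B ^ q * B ^ q).mulVec u) := key_cs _ hBq u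
    have hBB : B ^ q * B ^ q = B ^ (2 ^ (s + 1)) := by
      rw [← pow_add]
      congr 1
      rw [hq]
      omega
    calc (u ⬝ᵥ B.mulVec u) ^ (2 ^ (s + 1))
        ≤ (euclNorm u ^ (2 * q - 2)) ^ 2 * (u ⬝ᵥ (B ^ q).mulVec u) ^ 2 := by
          rw [step1, ← mul_pow]; exact step2
      _ ≤ (euclNorm u ^ (2 * q - 2)) ^ 2 *
            (euclNorm u ^ 2 * (u ⬝ᵥ (B ^ q * B ^ q).mulVec u)) := by
          apply mul_le_mul_of_nonneg_left step3 (by positivity)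
      _ = euclNorm u ^ (2 * (2 ^ (s + 1)) - 2) * (u ⬝ᵥ (B ^ (2 ^ (s + 1))).mulVec u) := by
          rw [hBB, ← pow_mul, ← mul_assoc, ← pow_add]
          congr 2
          have : 2 ^ (s + 1) = 2 * q := by rw [hq, pow_succ]; ring
          omega
end
end

section
/- Let B = A + Aᵀ − α Aᵀ A, where A = X (X − γY)ᵀ. Then for every step size α ∈ (0, (1−γ)/(1+γ)²], E[B] ≽ (1−γ) Σ in the Loewner order. -/
open MeasureTheory ProbabilityTheory Matrix
noncomputable section

/-- Entrywise expectation of a random matrix. -/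
def matExp {d : ℕ} {Ω : Type*} [MeasurableSpace Ω] (P : Measure Ω)
    (M : Ω → Matrix (Fin d) (Fin d) ℝ) : Matrix (Fin d) (Fin d) ℝ :=
  Matrix.of fun i j => ∫ ω, M ω i j ∂P

lemma abs_le_euclNorm {d : ℕ} (v : Fin d → ℝ) (i : Fin d) : |v i| ≤ euclNorm v := by
  rw [euclNorm, ← Real.sqrt_sq_eq_abs]
  exact Real.sqrt_le_sqrt (Finset.single_le_sum (fun j _ => sq_nonneg (v j)) (Finset.mem_univ i))

lemma sum_sq_le_one {d : ℕ} {v : Fin d → ℝ} (h : euclNorm v ≤ 1) : ∑ i, v i ^ 2 ≤ 1 := by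
  rw [euclNorm] at h
  have h0 : 0 ≤ ∑ i, v i ^ 2 := Finset.sum_nonneg fun i _ => sq_nonneg _
  nlinarith [Real.sq_sqrt h0, Real.sqrt_nonneg (∑ i, v i ^ 2)]

lemma integrable_of_bdd {Ω : Type*} [MeasurableSpace Ω] {P : Measure Ω} [IsProbabilityMeasure P]
    {f : Ω → ℝ} {C : ℝ} (hm : Measurable f) (h : ∀ᵐ ω ∂P, |f ω| ≤ C) : Integrable f P :=
  ⟨hm.aestronglyMeasurable, MeasureTheory.HasFiniteIntegral.of_bounded (by simpa [Real.norm_eq_abs] using h)⟩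

lemma quad_vmv {d : ℕ} (u v x : Fin d → ℝ) :
    x ⬝ᵥ (vecMulVec u v) *ᵥ x = (x ⬝ᵥ u) * (x ⬝ᵥ v) := by
  simp only [dotProduct, mulVec, vecMulVec_apply, Finset.mul_sum, Finset.sum_mul]
  rw [Finset.sum_comm]
  exact Finset.sum_congr rfl fun i _ => Finset.sum_congr rfl fun j _ => by ring

lemma vmvT {d : ℕ} (u v : Fin d → ℝ) : (vecMulVec u v)ᵀ = vecMulVec v u := by
  ext i j; simp [vecMulVec_apply, mul_comm]

lemma vmvmul {d : ℕ} (u v w z : Fin d → ℝ) :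
    vecMulVec u v * vecMulVec w z = (v ⬝ᵥ w) • vecMulVec u z := by
  ext i j
  simp only [Matrix.mul_apply, vecMulVec_apply, Matrix.smul_apply, dotProduct, smul_eq_mul,
    Finset.sum_mul, Finset.mul_sum]
  exact Finset.sum_congr rfl fun k _ => by ring

lemma quad_matExp {d : ℕ} {Ω : Type*} [MeasurableSpace Ω] (P : Measure Ω)
    (F : Ω → Matrix (Fin d) (Fin d) ℝ) (hF : ∀ i j, Integrable (fun ω => F ω i j) P)
    (x : Fin d → ℝ) :
    x ⬝ᵥ (matExp P F) *ᵥ x = ∫ ω, x ⬝ᵥ (F ω) *ᵥ x ∂P := by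
  simp only [dotProduct, mulVec, matExp, Matrix.of_apply]
  rw [integral_finset_sum _ (fun i _ =>
    ((integrable_finset_sum _ (fun j _ => (hF i j).mul_const (x j))).const_mul (x i)))]
  refine Finset.sum_congr rfl fun i _ => ?_
  rw [integral_const_mul]
  congr 1
  rw [integral_finset_sum _ (fun j _ => (hF i j).mul_const (x j))]
  exact Finset.sum_congr rfl fun j _ => (integral_mul_const _ _).symm

/-- Let `A = X (X - γ Y)ᵀ` and `B = A + Aᵀ - α Aᵀ A`. For every step size
`α ∈ (0, (1-γ)/(1+γ)²]`, `E[B] ≽ (1-γ) Σ` in the Loewner order, where `Σ = E[X Xᵀ]`. -/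
theorem stmt3 {d : ℕ} (hd : 1 ≤ d) (γ : ℝ) (hγ : γ ∈ Set.Ico (0 : ℝ) 1)
    {Ω : Type*} [MeasurableSpace Ω] (P : Measure Ω) [IsProbabilityMeasure P]
    (X Y : Ω → Fin d → ℝ) (hXm : Measurable X) (hYm : Measurable Y)
    (hX1 : ∀ᵐ ω ∂P, euclNorm (X ω) ≤ 1) (hY1 : ∀ᵐ ω ∂P, euclNorm (Y ω) ≤ 1)
    (hXY : IdentDistrib X Y P P)
    (α : ℝ) (hα : α ∈ Set.Ioc 0 ((1 - γ) / (1 + γ) ^ 2)) :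
    (matExp P (fun ω =>
        vecMulVec (X ω) (X ω - γ • Y ω) + (vecMulVec (X ω) (X ω - γ • Y ω))ᵀ
          - α • ((vecMulVec (X ω) (X ω - γ • Y ω))ᵀ * vecMulVec (X ω) (X ω - γ • Y ω)))
      - (1 - γ) • matExp P (fun ω => vecMulVec (X ω) (X ω))).PosSemidef := by
  obtain ⟨hγ0, hγ1⟩ := hγ
  obtain ⟨hα0, hα2⟩ := hα
  have hden : (0:ℝ) < (1 + γ) ^ 2 := by positivity
  have hα1γ : α * (1 + γ) ^ 2 ≤ 1 - γ := (le_div_iff₀ hden).1 hα2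
  have hα1 : α ≤ 1 := by nlinarith
  have hk : 0 ≤ 1 - α * (1 - γ) := by nlinarith
  -- components
  have hXi : ∀ i, Measurable fun ω => X ω i := fun i => (measurable_pi_apply i).comp hXm
  have hYi : ∀ i, Measurable fun ω => Y ω i := fun i => (measurable_pi_apply i).comp hYm
  set Z : Ω → Fin d → ℝ := fun ω => X ω - γ • Y ω with hZdef
  have hZval : ∀ ω i, Z ω i = X ω i - γ * Y ω i := fun ω i => rfl
  have hZi : ∀ i, Measurable fun ω => Z ω i := fun i => (hXi i).sub ((hYi i).const_mul γ)
  set s : Ω → ℝ := fun ω => X ω ⬝ᵥ X ω with hsdef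
  have hsm : Measurable s := Finset.measurable_sum _ fun i _ => (hXi i).mul (hXi i)
  have hs0 : ∀ ω, 0 ≤ s ω := fun ω => Finset.sum_nonneg fun i _ => mul_self_nonneg _
  -- a.e. bounds
  have hbX : ∀ᵐ ω ∂P, ∀ i, |X ω i| ≤ 1 := hX1.mono fun ω h i => (abs_le_euclNorm _ i).trans h
  have hbY : ∀ᵐ ω ∂P, ∀ i, |Y ω i| ≤ 1 := hY1.mono fun ω h i => (abs_le_euclNorm _ i).trans h
  have hbs : ∀ᵐ ω ∂P, s ω ≤ 1 := by
    filter_upwards [hX1] with ω h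
    have := sum_sq_le_one h
    simpa [hsdef, dotProduct, pow_two] using this
  have hbZ : ∀ᵐ ω ∂P, ∀ i, |Z ω i| ≤ 2 := by
    filter_upwards [hbX, hbY] with ω h1 h2 i
    rw [hZval, abs_le]
    have h1i := abs_le.1 (h1 i)
    have h2i := abs_le.1 (h2 i)
    constructor
    · nlinarith [h1i.1, h2i.1, h2i.2]
    · nlinarith [h1i.2, h2i.1, h2i.2]
  -- integrability of bounded products
  have hprod : ∀ (p q : Ω → ℝ) (Cp Cq : ℝ), Measurable p → Measurable q →
      (∀ᵐ ω ∂P, |p ω| ≤ Cp) → (∀ᵐ ω ∂P, |q ω| ≤ Cq) →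
      Integrable (fun ω => p ω * q ω) P := by
    intro p q Cp Cq hpm hqm hpb hqb
    refine integrable_of_bdd (C := Cp * Cq) (hpm.mul hqm) ?_
    filter_upwards [hpb, hqb] with ω h1 h2
    calc |p ω * q ω| = |p ω| * |q ω| := abs_mul _ _
      _ ≤ Cp * Cq := mul_le_mul h1 h2 (abs_nonneg _) ((abs_nonneg _).trans h1)
  -- the combined integrand
  set F : Ω → Matrix (Fin d) (Fin d) ℝ := fun ω =>
    vecMulVec (X ω) (Z ω) + vecMulVec (Z ω) (X ω) - (α * s ω) • vecMulVec (Z ω) (Z ω)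
      - (1 - γ) • vecMulVec (X ω) (X ω) with hFdef
  have hFentry : ∀ ω i j, F ω i j = X ω i * Z ω j + Z ω i * X ω j
      - α * (s ω * (Z ω i * Z ω j)) - (1 - γ) * (X ω i * X ω j) := by
    intro ω i j
    simp only [hFdef, Matrix.sub_apply, Matrix.add_apply, Matrix.smul_apply, vecMulVec_apply,
      smul_eq_mul]
    ring
  have hbss : ∀ᵐ ω ∂P, |s ω| ≤ 1 := by
    filter_upwards [hbs] with ω h; rw [abs_of_nonneg (hs0 ω)]; exact h
  have hFint : ∀ i j, Integrable (fun ω => F ω i j) P := by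
    intro i j
    have h1 := hprod _ _ 1 2 (hXi i) (hZi j) (hbX.mono fun ω h => h i) (hbZ.mono fun ω h => h j)
    have h2 := hprod _ _ 2 1 (hZi i) (hXi j) (hbZ.mono fun ω h => h i) (hbX.mono fun ω h => h j)
    have h3 := hprod _ _ 1 4 hsm ((hZi i).mul (hZi j)) hbss (by
      filter_upwards [hbZ] with ω h
      calc |Z ω i * Z ω j| = |Z ω i| * |Z ω j| := abs_mul _ _
        _ ≤ 2 * 2 := mul_le_mul (h i) (h j) (abs_nonneg _) (by norm_num)
        _ = 4 := by norm_num)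
    have h4 := hprod _ _ 1 1 (hXi i) (hXi j) (hbX.mono fun ω h => h i) (hbX.mono fun ω h => h j)
    have heq : (fun ω => F ω i j) = fun ω => (X ω i * Z ω j + Z ω i * X ω j)
        - α * (s ω * (Z ω i * Z ω j)) - (1 - γ) * (X ω i * X ω j) := by
      funext ω; rw [hFentry]; try ring
    rw [heq]
    exact ((h1.add h2).sub (h3.const_mul α)).sub (h4.const_mul (1 - γ))
  have hHint : ∀ i j, Integrable (fun ω => X ω i * X ω j) P := fun i j =>
    hprod _ _ 1 1 (hXi i) (hXi j) (hbX.mono fun ω h => h i) (hbX.mono fun ω h => h j)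
  -- the target matrix equals matExp P F
  have hGF : ∀ ω, vecMulVec (X ω) (X ω - γ • Y ω) + (vecMulVec (X ω) (X ω - γ • Y ω))ᵀ
      - α • ((vecMulVec (X ω) (X ω - γ • Y ω))ᵀ * vecMulVec (X ω) (X ω - γ • Y ω))
      = F ω + (1 - γ) • vecMulVec (X ω) (X ω) := by
    intro ω
    have hz : X ω - γ • Y ω = Z ω := rfl
    rw [hz, hFdef]
    simp only [vmvT, vmvmul, smul_smul, ← hsdef]
    module
  have hTarget : (matExp P (fun ω =>
        vecMulVec (X ω) (X ω - γ • Y ω) + (vecMulVec (X ω) (X ω - γ • Y ω))ᵀ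
          - α • ((vecMulVec (X ω) (X ω - γ • Y ω))ᵀ * vecMulVec (X ω) (X ω - γ • Y ω)))
      - (1 - γ) • matExp P (fun ω => vecMulVec (X ω) (X ω))) = matExp P F := by
    ext i j
    simp only [Matrix.sub_apply, Matrix.smul_apply, matExp, Matrix.of_apply, smul_eq_mul]
    have heq : ∀ ω, (vecMulVec (X ω) (X ω - γ • Y ω) + (vecMulVec (X ω) (X ω - γ • Y ω))ᵀ) i j -
        α * ((vecMulVec (X ω) (X ω - γ • Y ω))ᵀ * vecMulVec (X ω) (X ω - γ • Y ω)) i j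
        = F ω i j + (1 - γ) * (X ω i * X ω j) := by
      intro ω
      have h := congrFun (congrFun (hGF ω) i) j
      simp only [Matrix.sub_apply, Matrix.add_apply, Matrix.smul_apply, smul_eq_mul,
        vecMulVec_apply, transpose_apply, Matrix.mul_apply] at h ⊢
      linarith [h]
    have hI := integral_congr_ae (μ := P) (ae_of_all P heq)
    rw [hI, integral_add (hFint i j) ((hHint i j).const_mul (1 - γ)), integral_const_mul]
    simp only [vecMulVec_apply]
    ring
  rw [hTarget]
  rw [posSemidef_iff_dotProduct_mulVec]
  constructor
  · -- Hermitian
    ext i j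
    simp only [conjTranspose_apply, matExp, Matrix.of_apply, star_trivial]
    congr 1
    funext ω
    rw [hFentry, hFentry]
    ring
  · intro x
    have hstar : star x = x := by
      funext i; simp
    rw [hstar, quad_matExp P F hFint x]
    -- scalar functions
    set a : Ω → ℝ := fun ω => x ⬝ᵥ X ω with hadef
    set b : Ω → ℝ := fun ω => x ⬝ᵥ Y ω with hbdef
    have ham : Measurable a := Finset.measurable_sum _ fun i _ => (hXi i).const_mul (x i)
    have hbm : Measurable b := Finset.measurable_sum _ fun i _ => (hYi i).const_mul (x i)
    set cx : ℝ := ∑ i, |x i| with hcx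
    have hcx0 : 0 ≤ cx := Finset.sum_nonneg fun i _ => abs_nonneg _
    have hba : ∀ᵐ ω ∂P, |a ω| ≤ cx := by
      filter_upwards [hbX] with ω h
      calc |a ω| ≤ ∑ i, |x i * X ω i| := Finset.abs_sum_le_sum_abs _ _
        _ ≤ ∑ i, |x i| := Finset.sum_le_sum fun i _ => by
            rw [abs_mul]; exact mul_le_of_le_one_right (abs_nonneg _) (h i)
    have hbb : ∀ᵐ ω ∂P, |b ω| ≤ cx := by
      filter_upwards [hbY] with ω h
      calc |b ω| ≤ ∑ i, |x i * Y ω i| := Finset.abs_sum_le_sum_abs _ _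
        _ ≤ ∑ i, |x i| := Finset.sum_le_sum fun i _ => by
            rw [abs_mul]; exact mul_le_of_le_one_right (abs_nonneg _) (h i)
    have hbc : ∀ᵐ ω ∂P, |a ω - γ * b ω| ≤ (1 + γ) * cx := by
      filter_upwards [hba, hbb] with ω h1 h2
      rw [abs_le] at h1 h2 ⊢
      constructor <;> nlinarith [h1.1, h1.2, h2.1, h2.2]
    have hcm : Measurable fun ω => a ω - γ * b ω := ham.sub (hbm.const_mul γ)
    -- quadratic form value
    have hqval : ∀ ω, x ⬝ᵥ F ω *ᵥ x =
        2 * (a ω * (a ω - γ * b ω)) - α * (s ω * ((a ω - γ * b ω) * (a ω - γ * b ω)))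
          - (1 - γ) * (a ω * a ω) := by
      intro ω
      have hza : x ⬝ᵥ Z ω = a ω - γ * b ω := by
        simp only [hadef, hbdef, hZdef, dotProduct, Pi.sub_apply, Pi.smul_apply, smul_eq_mul,
          Finset.mul_sum]
        rw [← Finset.sum_sub_distrib]
        exact Finset.sum_congr rfl fun i _ => by ring
      rw [hFdef]
      simp only [Matrix.sub_mulVec, Matrix.add_mulVec, Matrix.smul_mulVec,
        dotProduct_sub, dotProduct_add, dotProduct_smul, smul_eq_mul, quad_vmv]
      rw [hza, hadef]
      ring
    rw [show (fun ω => x ⬝ᵥ F ω *ᵥ x) = fun ω =>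
        2 * (a ω * (a ω - γ * b ω)) - α * (s ω * ((a ω - γ * b ω) * (a ω - γ * b ω)))
          - (1 - γ) * (a ω * a ω) from funext hqval]
    -- integrability
    have hIac : Integrable (fun ω => a ω * (a ω - γ * b ω)) P :=
      hprod _ _ cx ((1 + γ) * cx) ham hcm hba hbc
    have hIsc : Integrable (fun ω => s ω * ((a ω - γ * b ω) * (a ω - γ * b ω))) P := by
      refine hprod _ _ 1 (((1 + γ) * cx) * ((1 + γ) * cx)) hsm (hcm.mul hcm) hbss ?_
      filter_upwards [hbc] with ω h
      calc |(a ω - γ * b ω) * (a ω - γ * b ω)| = |a ω - γ * b ω| * |a ω - γ * b ω| := abs_mul _ _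
        _ ≤ ((1 + γ) * cx) * ((1 + γ) * cx) := mul_le_mul h h (abs_nonneg _) ((abs_nonneg _).trans h)
    have hIa2 : Integrable (fun ω => a ω * a ω) P := hprod _ _ cx cx ham ham hba hba
    have hIb2 : Integrable (fun ω => b ω * b ω) P := hprod _ _ cx cx hbm hbm hbb hbb
    have hIq : Integrable (fun ω =>
        2 * (a ω * (a ω - γ * b ω)) - α * (s ω * ((a ω - γ * b ω) * (a ω - γ * b ω)))
          - (1 - γ) * (a ω * a ω)) P :=
      ((hIac.const_mul 2).sub (hIsc.const_mul α)).sub (hIa2.const_mul (1 - γ))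
    have hIg : Integrable (fun ω =>
        (1 - α * (1 - γ)) * (a ω * a ω - γ * (b ω * b ω))) P :=
      (hIa2.sub (hIb2.const_mul γ)).const_mul _
    -- a.e. pointwise bound
    have hae : ∀ᵐ ω ∂P, (1 - α * (1 - γ)) * (a ω * a ω - γ * (b ω * b ω)) ≤
        2 * (a ω * (a ω - γ * b ω)) - α * (s ω * ((a ω - γ * b ω) * (a ω - γ * b ω)))
          - (1 - γ) * (a ω * a ω) := by
      filter_upwards [hbs] with ω h1
      nlinarith [mul_nonneg (mul_nonneg hγ0 (sub_nonneg.2 hα1)) (sq_nonneg (a ω - b ω)),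
        mul_nonneg (mul_nonneg hα0.le (sub_nonneg.2 h1)) (sq_nonneg (a ω - γ * b ω)),
        hs0 ω]
    -- equal second moments
    have hab : ∫ ω, a ω * a ω ∂P = ∫ ω, b ω * b ω ∂P := by
      have hg : Measurable fun v : Fin d → ℝ => (x ⬝ᵥ v) * (x ⬝ᵥ v) :=
        (Finset.measurable_sum _ fun i _ => measurable_const.mul (measurable_pi_apply i)).mul
          (Finset.measurable_sum _ fun i _ => measurable_const.mul (measurable_pi_apply i))
      have := (hXY.comp hg).integral_eq
      simpa [Function.comp, hadef, hbdef] using this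
    have hIa2nn : 0 ≤ ∫ ω, a ω * a ω ∂P := integral_nonneg fun ω => mul_self_nonneg _
    have h1 : ∫ ω, (1 - α * (1 - γ)) * (a ω * a ω - γ * (b ω * b ω)) ∂P =
        (1 - α * (1 - γ)) * ((1 - γ) * ∫ ω, a ω * a ω ∂P) := by
      rw [integral_const_mul]
      congr 1
      rw [integral_sub hIa2 (hIb2.const_mul γ), integral_const_mul, ← hab]
      ring
    have h2 := integral_mono_ae hIg hIq hae
    rw [h1] at h2
    have h3 : 0 ≤ (1 - α * (1 - γ)) * ((1 - γ) * ∫ ω, a ω * a ω ∂P) := by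
      apply mul_nonneg hk
      apply mul_nonneg (by linarith) hIa2nn
    linarith
end
end

section
/- Assume Σ = E[X Xᵀ] is positive definite. Then the operator norm bound ‖Σ^{−1/2} E[X Yᵀ] Σ^{−1/2}‖ ≤ 1 holds, and consequently, with Ā = E[X (X − γY)ᵀ], ‖Σ^{−1/2} Ā Σ^{−1/2}‖ ≤ 1 + γ. -/
open MeasureTheory ProbabilityTheory Matrix
noncomputable section

/-- The `ℓ²`-operator norm of a real `d × d` matrix. -/
def opNorm {d : ℕ} (M : Matrix (Fin d) (Fin d) ℝ) : ℝ :=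
  ‖Matrix.toEuclideanCLM (𝕜 := ℝ) M‖

/-- The square root of a positive semidefinite matrix, as `Matrix.PosSemidef.sqrt` was defined
in Mathlib (Dec 2024); that definition has since been removed from Mathlib. -/
def Matrix.PosSemidef.sqrt {n : Type*} [Fintype n] [DecidableEq n] {A : Matrix n n ℝ}
    (hA : A.PosSemidef) : Matrix n n ℝ :=
  hA.1.eigenvectorUnitary.1 * diagonal ((↑) ∘ (√·) ∘ hA.1.eigenvalues) *
    (star hA.1.eigenvectorUnitary : Matrix n n ℝ)

lemma bddInt {Ω : Type*} [MeasurableSpace Ω] (P : Measure Ω) [IsProbabilityMeasure P]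
    {f : Ω → ℝ} (hm : Measurable f) {C : ℝ} (hb : ∀ᵐ ω ∂P, |f ω| ≤ C) : Integrable f P :=
  Integrable.mono' (integrable_const C) hm.aestronglyMeasurable (by simpa [Real.norm_eq_abs] using hb)

lemma intCS {Ω : Type*} [MeasurableSpace Ω] (P : Measure Ω) [IsProbabilityMeasure P]
    {f g : Ω → ℝ} (hf : Measurable f) (hg : Measurable g) {C D : ℝ}
    (hfb : ∀ᵐ ω ∂P, |f ω| ≤ C) (hgb : ∀ᵐ ω ∂P, |g ω| ≤ D) :
    ∫ ω, f ω * g ω ∂P ≤ Real.sqrt (∫ ω, f ω ^ 2 ∂P) * Real.sqrt (∫ ω, g ω ^ 2 ∂P) := by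
  have hfm : MemLp f (ENNReal.ofReal 2) P :=
    (memLp_top_of_bound hf.aestronglyMeasurable C
      (by simpa [Real.norm_eq_abs] using hfb)).mono_exponent le_top
  have hgm : MemLp g (ENNReal.ofReal 2) P :=
    (memLp_top_of_bound hg.aestronglyMeasurable D
      (by simpa [Real.norm_eq_abs] using hgb)).mono_exponent le_top
  have key := integral_mul_norm_le_Lp_mul_Lq (μ := P) (f := f) (g := g)
    Real.HolderConjugate.two_two hfm hgm
  have habs : ∀ᵐ ω ∂P, |f ω * g ω| ≤ C * D := by
    filter_upwards [hfb, hgb] with ω h1 h2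
    rw [abs_mul]
    exact mul_le_mul h1 h2 (abs_nonneg _) ((abs_nonneg _).trans h1)
  have h1 : ∫ ω, f ω * g ω ∂P ≤ ∫ ω, ‖f ω‖ * ‖g ω‖ ∂P := by
    refine integral_mono (bddInt P (hf.mul hg) habs)
      (bddInt P (hf.norm.mul hg.norm) (C := C * D) ?_) ?_
    · filter_upwards [hfb, hgb] with ω h1 h2
      simp only [Real.norm_eq_abs, abs_mul, abs_abs]
      exact mul_le_mul h1 h2 (abs_nonneg _) ((abs_nonneg _).trans h1)
    · intro ω
      calc f ω * g ω ≤ |f ω * g ω| := le_abs_self _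
        _ = ‖f ω‖ * ‖g ω‖ := by simp [abs_mul]
  refine h1.trans (key.trans_eq ?_)
  have e1 : ∀ h : Ω → ℝ, ∫ ω, ‖h ω‖ ^ (2:ℝ) ∂P = ∫ ω, h ω ^ 2 ∂P := by
    intro h
    refine integral_congr_ae (Filter.Eventually.of_forall fun ω => ?_)
    show ‖h ω‖ ^ (2:ℝ) = h ω ^ 2
    rw [show ‖h ω‖ ^ (2:ℝ) = ‖h ω‖ ^ 2 from by rw [← Real.rpow_natCast ‖h ω‖ 2]; norm_num]
    simp [sq_abs]
  rw [e1, e1, ← Real.sqrt_eq_rpow, ← Real.sqrt_eq_rpow]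

lemma dot_matExp {d : ℕ} {Ω : Type*} [MeasurableSpace Ω] (P : Measure Ω) [IsProbabilityMeasure P]
    {Z W : Ω → Fin d → ℝ} (hZ : Measurable Z) (hW : Measurable W)
    (hZb : ∀ i, ∀ᵐ ω ∂P, |Z ω i| ≤ 1) (hWb : ∀ i, ∀ᵐ ω ∂P, |W ω i| ≤ 1)
    (a b : Fin d → ℝ) :
    b ⬝ᵥ (matExp P (fun ω => vecMulVec (Z ω) (W ω)) *ᵥ a)
      = ∫ ω, (b ⬝ᵥ Z ω) * (a ⬝ᵥ W ω) ∂P := by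
  have hint : ∀ i j, Integrable (fun ω => (b i * a j) * (Z ω i * W ω j)) P := by
    intro i j
    refine bddInt P (measurable_const.mul (((measurable_pi_apply i).comp hZ).mul
      ((measurable_pi_apply j).comp hW))) (C := |b i * a j| * 1) ?_
    filter_upwards [hZb i, hWb j] with ω h1 h2
    rw [abs_mul]
    exact mul_le_mul_of_nonneg_left (by
      calc |Z ω i * W ω j| = |Z ω i| * |W ω j| := abs_mul _ _
        _ ≤ 1 * 1 := mul_le_mul h1 h2 (abs_nonneg _) zero_le_one
        _ = 1 := one_mul 1) (abs_nonneg _)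
  have hrw : ∀ ω, (b ⬝ᵥ Z ω) * (a ⬝ᵥ W ω)
      = ∑ i, ∑ j, (b i * a j) * (Z ω i * W ω j) := by
    intro ω
    rw [dotProduct, dotProduct, Finset.sum_mul_sum]
    exact Finset.sum_congr rfl fun i _ => Finset.sum_congr rfl fun j _ => by ring
  simp only [hrw]
  rw [integral_finset_sum _ (fun i _ => integrable_finset_sum _ (fun j _ => hint i j))]
  have : ∀ i, ∫ ω, ∑ j, (b i * a j) * (Z ω i * W ω j) ∂P
      = ∑ j, (b i * a j) * ∫ ω, Z ω i * W ω j ∂P := by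
    intro i
    rw [integral_finset_sum _ (fun j _ => hint i j)]
    exact Finset.sum_congr rfl fun j _ => integral_const_mul _ _
  simp only [this]
  simp only [matExp, mulVec, dotProduct, Matrix.of_apply, vecMulVec_apply, Finset.mul_sum]
  exact Finset.sum_congr rfl fun i _ => Finset.sum_congr rfl fun j _ => by ring

lemma opNorm_le_one_of_dot {d : ℕ} (N : Matrix (Fin d) (Fin d) ℝ)
    (h : ∀ u v : Fin d → ℝ, v ⬝ᵥ (N *ᵥ u) ≤ Real.sqrt (u ⬝ᵥ u) * Real.sqrt (v ⬝ᵥ v)) :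
    opNorm N ≤ 1 := by
  refine ContinuousLinearMap.opNorm_le_bound _ zero_le_one fun u => ?_
  set T := Matrix.toEuclideanCLM (𝕜 := ℝ) N with hT
  have hsqrt : ∀ w : EuclideanSpace ℝ (Fin d),
      Real.sqrt ((WithLp.equiv 2 _ w) ⬝ᵥ (WithLp.equiv 2 _ w)) = ‖w‖ := by
    intro w
    rw [EuclideanSpace.norm_eq]
    congr 1
    simp [dotProduct, sq]
  have hinner : inner ℝ (T u) (T u) ≤ ‖u‖ * ‖T u‖ := by
    have h2 := h (WithLp.equiv 2 _ u) (WithLp.equiv 2 _ (T u))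
    have e : inner ℝ (T u) (T u) = (WithLp.equiv 2 _ (T u)) ⬝ᵥ (N *ᵥ (WithLp.equiv 2 _ u)) := by
      rw [PiLp.inner_apply]
      simp [PiLp.inner_apply, dotProduct, mulVec, RCLike.inner_apply]
      simp only [sq]; rfl
    rw [e]
    calc (WithLp.equiv 2 _ (T u)) ⬝ᵥ (N *ᵥ (WithLp.equiv 2 _ u))
        ≤ Real.sqrt _ * Real.sqrt _ := h2
      _ = ‖u‖ * ‖T u‖ := by rw [hsqrt, hsqrt]
  have hns : ‖T u‖ ^ 2 ≤ ‖u‖ * ‖T u‖ := by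
    rwa [real_inner_self_eq_norm_sq] at hinner
  rcases eq_or_lt_of_le (norm_nonneg (T u)) with h0 | h0
  · rw [← h0, one_mul]; exact norm_nonneg u
  · rw [one_mul]
    nlinarith [norm_nonneg u]
set_option synthInstance.maxHeartbeats 1000000 in
set_option maxHeartbeats 1000000 in
/-- If `Σ = E[X Xᵀ]` is positive definite, then
`‖Σ^{-1/2} E[X Yᵀ] Σ^{-1/2}‖ ≤ 1` (operator norm) and, with `Ā = E[X (X - γY)ᵀ]`,
`‖Σ^{-1/2} Ā Σ^{-1/2}‖ ≤ 1 + γ`. -/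
theorem stmt17 {d : ℕ} (hd : 1 ≤ d) (γ : ℝ) (hγ : γ ∈ Set.Ico (0 : ℝ) 1)
    {Ω : Type*} [MeasurableSpace Ω] (P : Measure Ω) [IsProbabilityMeasure P]
    (X Y : Ω → Fin d → ℝ) (hXm : Measurable X) (hYm : Measurable Y)
    (hX1 : ∀ᵐ ω ∂P, euclNorm (X ω) ≤ 1) (hY1 : ∀ᵐ ω ∂P, euclNorm (Y ω) ≤ 1)
    (hXY : IdentDistrib X Y P P)
    (Sig : Matrix (Fin d) (Fin d) ℝ)
    (hSig : Sig = matExp P (fun ω => vecMulVec (X ω) (X ω))) (hpd : Sig.PosDef)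
    (Abar : Matrix (Fin d) (Fin d) ℝ)
    (hAbar : Abar = matExp P (fun ω => vecMulVec (X ω) (X ω - γ • Y ω))) :
    opNorm (hpd.posSemidef.sqrt⁻¹ * matExp P (fun ω => vecMulVec (X ω) (Y ω))
        * hpd.posSemidef.sqrt⁻¹) ≤ 1 ∧
      opNorm (hpd.posSemidef.sqrt⁻¹ * Abar * hpd.posSemidef.sqrt⁻¹) ≤ 1 + γ := by
  obtain ⟨hγ0, hγ1⟩ := hγ
  set Q := hpd.posSemidef.sqrt with hQdef
  set E := matExp P (fun ω => vecMulVec (X ω) (Y ω)) with hEdef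
  have hQpsd : Q.IsHermitian := by
    simp only [hQdef, Matrix.PosSemidef.sqrt, Matrix.IsHermitian, conjTranspose_mul,
      star_eq_conjTranspose, conjTranspose_conjTranspose, diagonal_conjTranspose, star_trivial,
      Matrix.mul_assoc]
  have hQQ : Q * Q = Sig := by
    conv_rhs => rw [hpd.posSemidef.1.spectral_theorem]
    rw [Unitary.conjStarAlgAut_apply]
    simp only [hQdef, Matrix.PosSemidef.sqrt, Matrix.mul_assoc]
    rw [← Matrix.mul_assoc (star _ : Matrix _ _ ℝ) _ _, Unitary.coe_star_mul_self, Matrix.one_mul,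
      ← Matrix.mul_assoc (diagonal _), diagonal_mul_diagonal]
    congr 3
    funext i
    simp [Real.mul_self_sqrt (hpd.posSemidef.eigenvalues_nonneg i)]
  have hQdet : IsUnit Q.det := by
    refine isUnit_iff_ne_zero.mpr fun h => ?_
    have := hpd.det_pos
    rw [← hQQ, det_mul, h, mul_zero] at this
    exact lt_irrefl _ this
  have hQiQ : Q⁻¹ * Q = 1 := Matrix.nonsing_inv_mul Q hQdet
  have hQQi : Q * Q⁻¹ = 1 := Matrix.mul_nonsing_inv Q hQdet
  have hQsymm : Qᵀ = Q := by
    have h1 := hQpsd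
    rwa [Matrix.IsHermitian, conjTranspose_eq_transpose_of_trivial] at h1
  have hRsymm : (Q⁻¹)ᵀ = Q⁻¹ := by rw [Matrix.transpose_nonsing_inv, hQsymm]
  have hRSR : Q⁻¹ * Sig * Q⁻¹ = 1 := by
    rw [← hQQ]
    calc Q⁻¹ * (Q * Q) * Q⁻¹ = (Q⁻¹ * Q) * (Q * Q⁻¹) := by
          simp only [Matrix.mul_assoc]
      _ = 1 := by rw [hQiQ, hQQi, one_mul]
  -- coordinatewise bounds
  have hcoord : ∀ (Z : Ω → Fin d → ℝ), (∀ᵐ ω ∂P, euclNorm (Z ω) ≤ 1) →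
      ∀ i, ∀ᵐ ω ∂P, |Z ω i| ≤ 1 := by
    intro Z hZ i
    filter_upwards [hZ] with ω h
    calc |Z ω i| = Real.sqrt ((Z ω i) ^ 2) := (Real.sqrt_sq_eq_abs _).symm
      _ ≤ Real.sqrt (∑ j, Z ω j ^ 2) := Real.sqrt_le_sqrt
          (Finset.single_le_sum (f := fun j => Z ω j ^ 2) (fun j _ => sq_nonneg _)
            (Finset.mem_univ i))
      _ ≤ 1 := h
  have hXb := hcoord X hX1
  have hYb := hcoord Y hY1
  -- dot product measurability and bounds
  have hdm : ∀ (c : Fin d → ℝ) (Z : Ω → Fin d → ℝ), Measurable Z →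
      Measurable (fun ω => c ⬝ᵥ Z ω) := by
    intro c Z hZ
    simp only [dotProduct]
    exact Finset.measurable_sum _ fun i _ =>
      measurable_const.mul ((measurable_pi_apply i).comp hZ)
  have hdb : ∀ (c : Fin d → ℝ) (Z : Ω → Fin d → ℝ), (∀ i, ∀ᵐ ω ∂P, |Z ω i| ≤ 1) →
      ∀ᵐ ω ∂P, |c ⬝ᵥ Z ω| ≤ ∑ i, |c i| := by
    intro c Z hZ
    filter_upwards [MeasureTheory.ae_all_iff.mpr hZ] with ω h
    calc |c ⬝ᵥ Z ω| ≤ ∑ i, |c i * Z ω i| := Finset.abs_sum_le_sum_abs _ _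
      _ ≤ ∑ i, |c i| := Finset.sum_le_sum fun i _ => by
          rw [abs_mul]
          calc |c i| * |Z ω i| ≤ |c i| * 1 := mul_le_mul_of_nonneg_left (h i) (abs_nonneg _)
            _ = |c i| := mul_one _
  -- vecMulVec transpose trick
  have hdot_conj : ∀ (M : Matrix (Fin d) (Fin d) ℝ) (u v : Fin d → ℝ),
      v ⬝ᵥ ((Q⁻¹ * M * Q⁻¹) *ᵥ u) = (Q⁻¹ *ᵥ v) ⬝ᵥ (M *ᵥ (Q⁻¹ *ᵥ u)) := by
    intro M u v
    rw [show (Q⁻¹ * M * Q⁻¹) *ᵥ u = Q⁻¹ *ᵥ (M *ᵥ (Q⁻¹ *ᵥ u)) by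
      rw [Matrix.mulVec_mulVec, Matrix.mulVec_mulVec]]
    rw [Matrix.dotProduct_mulVec, show v ᵥ* Q⁻¹ = Q⁻¹ *ᵥ v from by
      rw [← Matrix.vecMul_transpose, hRsymm]]
  -- second moment identities
  have hXX : ∀ c : Fin d → ℝ, ∫ ω, (c ⬝ᵥ X ω) ^ 2 ∂P = c ⬝ᵥ (Sig *ᵥ c) := by
    intro c
    rw [hSig, dot_matExp P hXm hXm hXb hXb c c]
    exact integral_congr_ae (Filter.Eventually.of_forall fun ω => (sq _).symm) |>.symm
  have hYY : ∀ c : Fin d → ℝ, ∫ ω, (c ⬝ᵥ Y ω) ^ 2 ∂P = c ⬝ᵥ (Sig *ᵥ c) := by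
    intro c
    rw [← hXX c]
    have hmeas : Measurable (fun w : Fin d → ℝ => (c ⬝ᵥ w) ^ 2) :=
      (Finset.measurable_sum Finset.univ fun i _ =>
        (measurable_pi_apply (X := fun _ : Fin d => ℝ) i).const_mul (c i)).pow_const 2
    exact ((hXY.comp hmeas).integral_eq).symm
  -- diagonal values
  have hdiag : ∀ v : Fin d → ℝ, (Q⁻¹ *ᵥ v) ⬝ᵥ (Sig *ᵥ (Q⁻¹ *ᵥ v)) = v ⬝ᵥ v := by
    intro v
    rw [← hdot_conj Sig v v, hRSR, Matrix.one_mulVec]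
  -- main inner product bound
  have key : ∀ u v : Fin d → ℝ,
      v ⬝ᵥ ((Q⁻¹ * E * Q⁻¹) *ᵥ u) ≤ Real.sqrt (u ⬝ᵥ u) * Real.sqrt (v ⬝ᵥ v) := by
    intro u v
    set a := Q⁻¹ *ᵥ u with ha
    set b := Q⁻¹ *ᵥ v with hb
    rw [hdot_conj E u v, hEdef, dot_matExp P hXm hYm hXb hYb a b]
    calc ∫ ω, (b ⬝ᵥ X ω) * (a ⬝ᵥ Y ω) ∂P
        ≤ Real.sqrt (∫ ω, (b ⬝ᵥ X ω) ^ 2 ∂P) * Real.sqrt (∫ ω, (a ⬝ᵥ Y ω) ^ 2 ∂P) :=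
          intCS P (hdm b X hXm) (hdm a Y hYm) (hdb b X hXb) (hdb a Y hYb)
      _ = Real.sqrt (v ⬝ᵥ v) * Real.sqrt (u ⬝ᵥ u) := by
          rw [hXX b, hYY a, hb, ha, hdiag v, hdiag u]
      _ = Real.sqrt (u ⬝ᵥ u) * Real.sqrt (v ⬝ᵥ v) := mul_comm _ _
  have part1 : opNorm (Q⁻¹ * E * Q⁻¹) ≤ 1 := opNorm_le_one_of_dot _ key
  refine ⟨part1, ?_⟩
  -- part 2
  have hprodInt : ∀ (Z W : Ω → Fin d → ℝ), Measurable Z → Measurable W →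
      (∀ i, ∀ᵐ ω ∂P, |Z ω i| ≤ 1) → (∀ i, ∀ᵐ ω ∂P, |W ω i| ≤ 1) →
      ∀ i j, Integrable (fun ω => Z ω i * W ω j) P := by
    intro Z W hZ hW hZb hWb i j
    refine bddInt P (((measurable_pi_apply i).comp hZ).mul
      ((measurable_pi_apply j).comp hW)) (C := 1) ?_
    filter_upwards [hZb i, hWb j] with ω h1 h2
    calc |Z ω i * W ω j| = |Z ω i| * |W ω j| := abs_mul _ _
      _ ≤ 1 * 1 := mul_le_mul h1 h2 (abs_nonneg _) zero_le_one
      _ = 1 := one_mul 1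
  have hAeq : Abar = Sig - γ • E := by
    rw [hAbar, hSig, hEdef]
    ext i j
    simp only [matExp, Matrix.of_apply, vecMulVec_apply, Matrix.sub_apply, Matrix.smul_apply,
      Pi.sub_apply, Pi.smul_apply, smul_eq_mul]
    rw [show (fun ω => X ω i * (X ω j - γ * Y ω j)) =
        fun ω => X ω i * X ω j - γ * (X ω i * Y ω j) from funext fun ω => by ring]
    rw [integral_sub (hprodInt X X hXm hXm hXb hXb i j)
      ((hprodInt X Y hXm hYm hXb hYb i j).const_mul γ), integral_const_mul]
  have hfact : Q⁻¹ * Abar * Q⁻¹ = 1 - γ • (Q⁻¹ * E * Q⁻¹) := by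
    rw [hAeq, Matrix.mul_sub, Matrix.sub_mul, hRSR]
    congr 1
    rw [Matrix.mul_smul, Matrix.smul_mul]
  rw [hfact]
  unfold opNorm
  rw [map_sub, _root_.map_one, _root_.map_smul]
  calc ‖(1 : EuclideanSpace ℝ (Fin d) →L[ℝ] EuclideanSpace ℝ (Fin d))
        - γ • Matrix.toEuclideanCLM (𝕜 := ℝ) (Q⁻¹ * E * Q⁻¹)‖
      ≤ ‖(1 : EuclideanSpace ℝ (Fin d) →L[ℝ] EuclideanSpace ℝ (Fin d))‖
        + ‖γ • Matrix.toEuclideanCLM (𝕜 := ℝ) (Q⁻¹ * E * Q⁻¹)‖ := norm_sub_le _ _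
    _ ≤ 1 + γ := by
        have h1 : ‖(1 : EuclideanSpace ℝ (Fin d) →L[ℝ] EuclideanSpace ℝ (Fin d))‖ ≤ 1 :=
          ContinuousLinearMap.norm_id_le
        have h2 : ‖γ • Matrix.toEuclideanCLM (𝕜 := ℝ) (Q⁻¹ * E * Q⁻¹)‖ ≤ γ := by
          refine (norm_smul_le γ (Matrix.toEuclideanCLM (𝕜 := ℝ) (Q⁻¹ * E * Q⁻¹))).trans ?_
          rw [Real.norm_eq_abs, abs_of_nonneg hγ0]
          calc γ * ‖Matrix.toEuclideanCLM (𝕜 := ℝ) (Q⁻¹ * E * Q⁻¹)‖ ≤ γ * 1 :=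
                mul_le_mul_of_nonneg_left part1 hγ0
            _ = γ := mul_one γ
        exact add_le_add h1 h2
end
end
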